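/- Let a < b be coprime integers greater than 2, S = ⟨a,b⟩, m ≥ 2c − 1, and i < j < k in {0,…,b−1}. Then (D(m ⊕ i) ∩ D(m ⊕ k)) \ D(m) ⊆ D(m ⊕ j) \ D(m). -/
import Mathlib


/-- A numerical semigroup: a cofinite submonoid of ℕ, viewed inside ℤ. -/
def IsNumSgp (S : Set ℤ) : Prop :=
  0 ∈ S ∧ (∀ x ∈ S, 0 ≤ x) ∧ (∀ x ∈ S, ∀ y ∈ S, x + y ∈ S) ∧
    {x : ℤ | 0 ≤ x ∧ x ∉ S}.Finite

/-- `c` is the conductor of `S`: least integer with `c + ℕ ⊆ S`. -/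
def IsConductor (S : Set ℤ) (c : ℤ) : Prop :=
  (∀ n, c ≤ n → n ∈ S) ∧ ∀ c', (∀ n, c' ≤ n → n ∈ S) → c ≤ c'

/-- Set of divisors of `x` in `S`: `D(x) = {s ∈ S | x - s ∈ S}`. -/
def divs (S : Set ℤ) (x : ℤ) : Set ℤ := {s | s ∈ S ∧ x - s ∈ S}

/-- Genus: number of gaps. -/
noncomputable def genus (S : Set ℤ) : ℕ := {x : ℤ | 0 ≤ x ∧ x ∉ S}.ncard

/-- Apéry set of `S` with respect to the integer `n`. -/
def Ap (S : Set ℤ) (n : ℤ) : Set ℤ := {s | s ∈ S ∧ s - n ∉ S}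

/-- The numerical semigroup generated by `a` and `b`. -/
def gen2 (a b : ℤ) : Set ℤ := {n | ∃ x y : ℕ, n = (x : ℤ) * a + (y : ℤ) * b}

lemma gen2_canon {a b : ℤ} (ha : 0 < a) (hb : 0 < b) {n : ℤ} :
    n ∈ gen2 a b ↔ ∃ x y : ℤ, 0 ≤ x ∧ x < b ∧ 0 ≤ y ∧ n = x * a + y * b := by
  constructor
  · rintro ⟨x, y, rfl⟩
    refine ⟨(x : ℤ) % b, (y : ℤ) + ((x : ℤ) / b) * a,
      Int.emod_nonneg _ hb.ne', Int.emod_lt_of_pos _ hb,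
      add_nonneg (Int.natCast_nonneg y)
        (mul_nonneg (Int.ediv_nonneg (Int.natCast_nonneg x) hb.le) ha.le), ?_⟩
    have h := Int.emod_add_mul_ediv (x : ℤ) b
    linear_combination (-a) * h
  · rintro ⟨x, y, hx0, _, hy0, rfl⟩
    exact ⟨x.toNat, y.toNat, by rw [Int.toNat_of_nonneg hx0, Int.toNat_of_nonneg hy0]⟩

lemma gen2_mem_iff {a b : ℤ} (ha : 0 < a) (hb : 0 < b) (hcop : IsCoprime a b)
    {n x : ℤ} (hx0 : 0 ≤ x) (hxb : x < b) (hdvd : b ∣ n - x * a) :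
    n ∈ gen2 a b ↔ x * a ≤ n := by
  constructor
  · intro hn
    rw [gen2_canon ha hb] at hn
    obtain ⟨x', y, hx'0, hx'b, hy0, rfl⟩ := hn
    have h1 : b ∣ (x' - x) * a := by
      have h2 : b ∣ y * b := Dvd.intro_left y rfl
      have := hdvd.sub h2
      have heq : x' * a + y * b - x * a - y * b = (x' - x) * a := by ring
      rwa [heq] at this
    have h3 : b ∣ x' - x := hcop.symm.dvd_of_dvd_mul_right h1
    obtain ⟨t, ht⟩ := h3
    have ht1 : t < 1 := by nlinarith
    have ht2 : -1 < t := by nlinarith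
    have : t = 0 := by omega
    have hx : x' = x := by rw [this, mul_zero] at ht; linarith
    subst hx
    nlinarith [mul_nonneg hy0 hb.le]
  · intro h
    obtain ⟨q, hq⟩ := hdvd
    have hq0 : 0 ≤ q := by nlinarith
    rw [gen2_canon ha hb]
    exact ⟨x, q, hx0, hxb, hq0, by linarith⟩

theorem stmt_11 (a b : ℤ) (ha : 2 < a) (hab : a < b) (hcop : IsCoprime a b)
    (m : ℤ) (hm : 2 * (a * b - a - b + 1) - 1 ≤ m)
    (i j k : ℤ) (hi0 : 0 ≤ i) (hij : i < j) (hjk : j < k) (hkb : k ≤ b - 1) :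
    (divs (gen2 a b) (m + (i * a) % b) ∩ divs (gen2 a b) (m + (k * a) % b))
      \ divs (gen2 a b) m
      ⊆ divs (gen2 a b) (m + (j * a) % b) \ divs (gen2 a b) m := by
  have ha0 : 0 < a := by linarith
  have hb : 0 < b := by linarith
  obtain ⟨u, v, huv⟩ := hcop
  have hcop' : IsCoprime a b := ⟨u, v, huv⟩
  intro s hs
  obtain ⟨⟨hsi, hsk⟩, hsm⟩ := hs
  simp only [divs, Set.mem_setOf_eq] at hsi hsk hsm ⊢
  have hsS : s ∈ gen2 a b := hsi.1
  have hms : m - s ∉ gen2 a b := fun h => hsm ⟨hsS, h⟩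
  -- the Apéry class of m - s
  set L : ℤ := (m - s) * u % b with hLdef
  have hL0 : 0 ≤ L := Int.emod_nonneg _ hb.ne'
  have hLb : L < b := Int.emod_lt_of_pos _ hb
  have hdL : b ∣ (m - s) - L * a := by
    refine ⟨(m - s) * v + ((m - s) * u / b) * a, ?_⟩
    have h := Int.emod_add_mul_ediv ((m - s) * u) b
    rw [hLdef]
    linear_combination (-a) * h - (m - s) * huv
  obtain ⟨w, hw⟩ := hdL
  have hnotin : ¬ (L * a ≤ m - s) := by
    rw [← gen2_mem_iff ha0 hb hcop' hL0 hLb ⟨w, hw⟩]; exact hms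
  push_neg at hnotin
  have hw1 : w ≤ -1 := by nlinarith
  -- key characterization
  have key : ∀ x : ℤ, 0 ≤ x → x ≤ b - 1 →
      (m + x * a % b - s ∈ gen2 a b ↔ -w ≤ ((L + x) / b) * a - (x * a) / b) := by
    intro x hx0 hxb
    have h1 := Int.emod_add_mul_ediv (x * a) b
    have h2 := Int.emod_add_mul_ediv (L + x) b
    have hdx : b ∣ (m + x * a % b - s) - ((L + x) % b) * a :=
      ⟨w + ((L + x) / b) * a - (x * a) / b, by linear_combination hw + h1 - a * h2⟩
    rw [gen2_mem_iff ha0 hb hcop' (Int.emod_nonneg _ hb.ne') (Int.emod_lt_of_pos _ hb) hdx]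
    constructor
    · intro h'
      nlinarith
    · intro h'
      nlinarith
  have ci := (key i hi0 (by linarith)).mp hsi.2
  have ck := (key k (by linarith) hkb).mp hsk.2
  -- floor divisions facts
  have hei0 : 0 ≤ (L + i) / b := Int.ediv_nonneg (by linarith) hb.le
  have heij : (L + i) / b ≤ (L + j) / b := Int.ediv_le_ediv hb (by linarith)
  have hejk : (L + j) / b ≤ (L + k) / b := Int.ediv_le_ediv hb (by linarith)
  have hek1 : (L + k) / b ≤ 1 := by
    have : (L + k) / b < 2 := (Int.ediv_lt_iff_lt_mul hb).mpr (by linarith)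
    omega
  have hfi0 : 0 ≤ (i * a) / b := Int.ediv_nonneg (mul_nonneg hi0 ha0.le) hb.le
  have hfjk : (j * a) / b ≤ (k * a) / b :=
    Int.ediv_le_ediv hb (mul_le_mul_of_nonneg_right hjk.le ha0.le)
  have hei1 : 1 ≤ (L + i) / b := by nlinarith
  have hej : (L + j) / b = 1 := le_antisymm (le_trans hejk hek1) (le_trans hei1 heij)
  have hek : (L + k) / b = 1 := le_antisymm hek1 (le_trans (le_trans hei1 heij) hejk)
  refine ⟨⟨hsS, ?_⟩, fun h => hsm h⟩
  rw [key j (by linarith) (by linarith), hej]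
  rw [hek] at ck
  linarith
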